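/- Let f0 : (0,∞) → [0,∞) be an integrable function with ∫₀^∞ f0 = 1 and let F0(x) = ∫₀^x f0(y) dy be its (continuous) distribution function. Let n ≥ 1 be an integer and let a₁ ≤ a₂ ≤ … ≤ a_n be points of (0,∞) with F0(a_k) = (2k−1)/(2n) for 1 ≤ k ≤ n, and set empN₀ = (1/n) Σ_{k=1}^n δ_{a_k}. Then for every h > 0, ω(h; empN₀) ≤ ω(h; F0) + 1/n, where ω(h; F0) = sup_{x ≥ 0} (F0(x+h) − F0(x)). -/
import Mathlib


open MeasureTheory Set

/-- The modulus `ω(h; μ) = sup_{x ≥ 0} μ([x, x+h))`. -/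
noncomputable def omegaMeas (h : ℝ) (μ : Measure ℝ) : ℝ :=
  ⨆ x : Ici (0:ℝ), (μ (Ico (x : ℝ) ((x : ℝ) + h))).toReal

/-- modulus of continuity of the quantile empirical measure.
Let `f0 ≥ 0` be integrable on `(0,∞)` with total mass `1` and distribution function `F0`.
If `a₁ ≤ … ≤ a_n` are points of `(0,∞)` with `F0(a_k) = (2k−1)/(2n)` and
`empN₀ = (1/n) Σ δ_{a_k}`, then for every `h > 0`,
`ω(h; empN₀) ≤ ω(h; F0) + 1/n`, where `ω(h; F0) = sup_{x ≥ 0} (F0(x+h) − F0(x))`. -/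
theorem empirical_modulus_estimate
    (f0 : ℝ → ℝ)
    (hf0nonneg : ∀ x ∈ Ioi (0:ℝ), 0 ≤ f0 x)
    (hf0int : IntegrableOn f0 (Ioi 0))
    (hf0norm : ∫ y in Ioi (0:ℝ), f0 y = 1)
    (F0 : ℝ → ℝ) (hF0 : ∀ x, F0 x = ∫ y in Ioc (0:ℝ) x, f0 y)
    (n : ℕ) (hn : 1 ≤ n)
    (a : Fin n → ℝ) (hamono : Monotone a) (hapos : ∀ k, 0 < a k)
    (hquant : ∀ k : Fin n, F0 (a k) = (2 * (k : ℝ) + 1) / (2 * n)) :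
    ∀ h : ℝ, 0 < h →
      omegaMeas h ((n : ENNReal)⁻¹ • ∑ k : Fin n, Measure.dirac (a k))
        ≤ (⨆ x : Ici (0:ℝ), (F0 ((x : ℝ) + h) - F0 (x : ℝ))) + 1 / n := by
  intro h hpos
  have hn0 : (0:ℝ) < n := by exact_mod_cast hn
  have hF0mono : Monotone F0 := by
    intro u v huv
    rw [hF0, hF0]
    apply setIntegral_mono_set (hf0int.mono_set Ioc_subset_Ioi_self)
    · filter_upwards [ae_restrict_mem measurableSet_Ioc] with z hz
      exact hf0nonneg z hz.1
    · exact HasSubset.Subset.eventuallyLE (Ioc_subset_Ioc_right huv)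
  have hF0nonneg : ∀ u, 0 ≤ F0 u := by
    intro u
    rw [hF0]
    exact setIntegral_nonneg measurableSet_Ioc fun z hz => hf0nonneg z hz.1
  have hF0le1 : ∀ u, F0 u ≤ 1 := by
    intro u
    rw [hF0, ← hf0norm]
    apply setIntegral_mono_set hf0int
    · filter_upwards [ae_restrict_mem measurableSet_Ioi] with z hz
      exact hf0nonneg z hz
    · exact HasSubset.Subset.eventuallyLE Ioc_subset_Ioi_self
  have hbdd : BddAbove (Set.range fun x : Ici (0:ℝ) => F0 ((x:ℝ) + h) - F0 (x:ℝ)) := by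
    refine ⟨1, ?_⟩
    rintro _ ⟨x, rfl⟩
    dsimp only
    have := hF0nonneg (x:ℝ)
    have := hF0le1 ((x:ℝ) + h)
    linarith
  have hne : Nonempty (Ici (0:ℝ)) := ⟨⟨0, Set.self_mem_Ici⟩⟩
  unfold omegaMeas
  apply ciSup_le
  intro x
  have hx0 : (0:ℝ) ≤ (x:ℝ) := x.2
  set S := Finset.univ.filter (fun k : Fin n => (x:ℝ) ≤ a k ∧ a k < (x:ℝ) + h) with hSdef
  have hmeas : (((n : ENNReal)⁻¹ • ∑ k : Fin n, Measure.dirac (a k))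
      (Ico (x:ℝ) ((x:ℝ)+h))) = (n:ENNReal)⁻¹ * S.card := by
    rw [Measure.smul_apply, Measure.finset_sum_apply, smul_eq_mul]
    congr 1
    rw [← Finset.sum_boole]
    apply Finset.sum_congr rfl
    intro k _
    rw [Measure.dirac_apply' _ measurableSet_Ico]
    simp [Set.indicator_apply, Set.mem_Ico]
  rw [hmeas, ENNReal.toReal_mul, ENNReal.toReal_inv]
  simp only [ENNReal.toReal_natCast]
  have hsup_ge : F0 ((x:ℝ) + h) - F0 (x:ℝ) ≤ ⨆ x : Ici (0:ℝ), (F0 ((x:ℝ) + h) - F0 (x:ℝ)) :=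
    le_ciSup hbdd x
  rcases Finset.eq_empty_or_nonempty S with hS | hS
  · rw [hS]
    simp only [Finset.card_empty, Nat.cast_zero, mul_zero]
    have h1 : 0 ≤ F0 ((x:ℝ) + h) - F0 (x:ℝ) := by
      have := hF0mono (le_add_of_nonneg_right hpos.le : (x:ℝ) ≤ (x:ℝ) + h)
      linarith
    have : 0 < 1 / (n:ℝ) := by positivity
    linarith
  · set i := S.min' hS with hi
    set j := S.max' hS with hj
    have hiS : i ∈ S := S.min'_mem hS
    have hjS : j ∈ S := S.max'_mem hS
    have hij : i ≤ j := S.min'_le j hjS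
    have hsub : S ⊆ Finset.Icc i j := by
      intro k hk
      exact Finset.mem_Icc.mpr ⟨S.min'_le k hk, S.le_max' k hk⟩
    have hcard : S.card ≤ j.val + 1 - i.val := by
      have := Finset.card_le_card hsub
      rwa [Fin.card_Icc] at this
    have hcardR : (S.card : ℝ) ≤ (j:ℝ) + 1 - (i:ℝ) := by
      have h1 : i.val ≤ j.val + 1 := Nat.le_succ_of_le hij
      have := (Nat.cast_le (α := ℝ)).mpr hcard
      rwa [Nat.cast_sub h1, Nat.cast_add, Nat.cast_one] at this
    have hiSm := Finset.mem_filter.mp hiS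
    have hjSm := Finset.mem_filter.mp hjS
    have hFi : F0 (x:ℝ) ≤ F0 (a i) := hF0mono hiSm.2.1
    have hFj : F0 (a j) ≤ F0 ((x:ℝ) + h) := hF0mono hjSm.2.2.le
    have hdiff : F0 (a j) - F0 (a i) = ((j:ℝ) - (i:ℝ)) / n := by
      rw [hquant, hquant]
      field_simp
      ring
    have key : (n:ℝ)⁻¹ * S.card ≤ (F0 ((x:ℝ)+h) - F0 (x:ℝ)) + 1 / n := by
      rw [inv_mul_eq_div, div_le_iff₀ hn0] at *
      have : ((j:ℝ) - (i:ℝ)) / n ≤ F0 ((x:ℝ)+h) - F0 (x:ℝ) := by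
        rw [← hdiff]; linarith
      rw [div_le_iff₀ hn0] at this
      have h1n : (1:ℝ)/n * n = 1 := by field_simp
      nlinarith
    linarith
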